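/- A graph with at least 3 vertices has an ear-decomposition if and only if it is 2-connected. -/

import Mathlib

open SimpleGraph

variable {V : Type*}

/-- A graph is 2-connected: connected, at least 3 vertices, and deleting any
vertex keeps it connected. -/
def TwoConnected (G : SimpleGraph V) : Prop :=
  G.Connected ∧ 3 ≤ Nat.card V ∧
    ∀ v : V, ((⊤ : G.Subgraph).deleteVerts {v}).coe.Connected

/-- A graph is non-bipartite iff it has an odd circuit. -/
def HasOddCircuit (G : SimpleGraph V) : Prop :=
  ∃ (u : V) (c : G.Walk u u), c.IsCycle ∧ Odd c.length

/-- `G` contains a totally odd subdivision of `C3+` (triangle with a doubled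
edge): equivalently, the union of an odd circuit and an odd path having exactly
its two distinct endpoints on the circuit. -/
def ContainsOddC3Plus (G : SimpleGraph V) : Prop :=
  ∃ (x : V) (c : G.Walk x x) (a b : V) (p : G.Walk a b),
    c.IsCycle ∧ Odd c.length ∧ p.IsPath ∧ Odd p.length ∧ a ≠ b ∧
    a ∈ c.support ∧ b ∈ c.support ∧
    ∀ w ∈ p.support, w ∈ c.support → w = a ∨ w = b

section Space
variable [Fintype V] [DecidableEq V]

/-- `C` is the edge set of a circuit of `G`. -/
def IsCircuitSet (G : SimpleGraph V) (C : Finset (Sym2 V)) : Prop :=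
  ∃ (u : V) (c : G.Walk u u), c.IsCycle ∧ C = c.edges.toFinset

/-- incidence vector over `𝔽₂` of a set of edges -/
def edgeInd (C : Finset (Sym2 V)) : Sym2 V → ZMod 2 :=
  fun e => if e ∈ C then 1 else 0

/-- the cycle space of `G`: the `𝔽₂`-span of incidence vectors of circuits -/
def cycleSpace (G : SimpleGraph V) : Submodule (ZMod 2) (Sym2 V → ZMod 2) :=
  Submodule.span (ZMod 2) {x | ∃ C, IsCircuitSet G C ∧ x = edgeInd C}

/-- `C` is a cycle of `G` (an element of the cycle space). -/
def IsCycleSet (G : SimpleGraph V) (C : Finset (Sym2 V)) : Prop :=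
  edgeInd C ∈ cycleSpace G

/-- `B` is a cycle basis of `G`: a family of cycles whose incidence vectors
form a basis of the cycle space. -/
def IsCycleBasis (G : SimpleGraph V) (B : Finset (Finset (Sym2 V))) : Prop :=
  (∀ C ∈ B, IsCycleSet G C) ∧
  LinearIndependent (ZMod 2) (fun C : B => edgeInd C.1) ∧
  Submodule.span (ZMod 2) (edgeInd '' (B : Set (Finset (Sym2 V)))) = cycleSpace G

end Space

/-- data of a potential ear: two endpoints and a walk between them -/
abbrev EarData (G : SimpleGraph V) := Σ a : V, Σ b : V, G.Walk a b

/-- the union of a base circuit and a list of ears, as a subgraph -/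
def earsUnion {G : SimpleGraph V} {x : V} (base : G.Walk x x)
    (ears : List (EarData G)) : G.Subgraph :=
  ears.foldl (fun H e => H ⊔ e.2.2.toSubgraph) base.toSubgraph

/-- `e` is an ear of the subgraph `H`: a path with exactly its two distinct
endpoints in `H`, all edges new. -/
def IsEar {G : SimpleGraph V} (H : G.Subgraph) (e : EarData G) : Prop :=
  e.2.2.IsPath ∧ e.1 ≠ e.2.1 ∧ e.1 ∈ H.verts ∧ e.2.1 ∈ H.verts ∧
  (∀ v ∈ e.2.2.support, v ≠ e.1 → v ≠ e.2.1 → v ∉ H.verts) ∧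
  ∀ ed ∈ e.2.2.edges, ed ∉ H.edgeSet

/-- an (open) ear-decomposition of `G` -/
structure EarDecomposition (G : SimpleGraph V) where
  x : V
  base : G.Walk x x
  base_cycle : base.IsCycle
  ears : List (EarData G)
  ear_cond : ∀ i (h : i < ears.length),
    IsEar (earsUnion base (ears.take i)) (ears.get ⟨i, h⟩)
  union_top : earsUnion base ears = ⊤

/-- an ear-decomposition is odd if the base circuit and all ears are odd -/
def EarDecomposition.IsOdd {G : SimpleGraph V} (ed : EarDecomposition G) : Prop :=
  Odd ed.base.length ∧ ∀ e ∈ ed.ears, Odd e.2.2.length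

/-- `G` is a totally odd subdivision of `K₄`. -/
def IsTotallyOddK4 (G : SimpleGraph V) : Prop :=
  ∃ (b : Fin 4 → V) (p : ∀ i j : Fin 4, i < j → G.Walk (b i) (b j)),
    Function.Injective b ∧
    (∀ i j h, (p i j h).IsPath ∧ Odd (p i j h).length) ∧
    (∀ i j h i' j' h', (i, j) ≠ (i', j') →
      ∀ v ∈ (p i j h).support, v ∈ (p i' j' h').support →
        (v = b i ∨ v = b j) ∧ (v = b i' ∨ v = b j')) ∧
    (⨆ i, ⨆ j, ⨆ h : i < j, (p i j h).toSubgraph) = ⊤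

/-- `G` contains a totally odd subdivision of `K₄` as a subgraph. -/
def ContainsTotallyOddK4 (G : SimpleGraph V) : Prop :=
  ∃ (b : Fin 4 → V) (p : ∀ i j : Fin 4, i < j → G.Walk (b i) (b j)),
    Function.Injective b ∧
    (∀ i j h, (p i j h).IsPath ∧ Odd (p i j h).length) ∧
    (∀ i j h i' j' h', (i, j) ≠ (i', j') →
      ∀ v ∈ (p i j h).support, v ∈ (p i' j' h').support →
        (v = b i ∨ v = b j) ∧ (v = b i' ∨ v = b j'))

/-- `G` contains an odd theta subgraph through the vertex `w`: three pairwise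
internally disjoint and edge-disjoint odd paths with the same distinct ends,
one of them passing through `w`. -/
def ContainsOddThetaThrough (G : SimpleGraph V) (w : V) : Prop :=
  ∃ (x y : V) (p1 p2 p3 : G.Walk x y), x ≠ y ∧
    p1.IsPath ∧ p2.IsPath ∧ p3.IsPath ∧
    Odd p1.length ∧ Odd p2.length ∧ Odd p3.length ∧
    (∀ v ∈ p1.support, v ∈ p2.support → v = x ∨ v = y) ∧
    (∀ v ∈ p1.support, v ∈ p3.support → v = x ∨ v = y) ∧
    (∀ v ∈ p2.support, v ∈ p3.support → v = x ∨ v = y) ∧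
    (∀ e ∈ p1.edges, e ∉ p2.edges) ∧
    (∀ e ∈ p1.edges, e ∉ p3.edges) ∧
    (∀ e ∈ p2.edges, e ∉ p3.edges) ∧
    (w ∈ p1.support ∨ w ∈ p2.support ∨ w ∈ p3.support)

/-- a graph is factor-critical if deleting any vertex leaves a graph with a
perfect matching -/
def FactorCritical {W : Type*} (H : SimpleGraph W) : Prop :=
  ∀ v : W, ∃ M : ((⊤ : H.Subgraph).deleteVerts {v}).coe.Subgraph,
    M.IsPerfectMatching

section Helpers
set_option linter.unusedSectionVars false
variable {G : SimpleGraph V}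

lemma deleteVerts_sup (H K : G.Subgraph) (s : Set V) :
    (H ⊔ K).deleteVerts s = H.deleteVerts s ⊔ K.deleteVerts s := by
  refine le_antisymm ?_ (sup_le (Subgraph.deleteVerts_mono le_sup_left)
    (Subgraph.deleteVerts_mono le_sup_right))
  constructor
  · intro x hx
    simp only [Subgraph.deleteVerts_verts, Subgraph.verts_sup, Set.mem_diff,
      Set.mem_union] at hx ⊢
    tauto
  · intro x y hxy
    simp only [Subgraph.deleteVerts_adj, Subgraph.verts_sup, Subgraph.sup_adj,
      Set.mem_union] at hxy ⊢
    rcases hxy.2.2.2.2 with h | h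
    · exact Or.inl ⟨h.fst_mem, hxy.2.1, h.snd_mem, hxy.2.2.2.1, h⟩
    · exact Or.inr ⟨h.fst_mem, hxy.2.1, h.snd_mem, hxy.2.2.2.1, h⟩

lemma deleteVerts_eq_self (H : G.Subgraph) {v : V} (hv : v ∉ H.verts) :
    H.deleteVerts {v} = H := by
  refine le_antisymm Subgraph.deleteVerts_le ?_
  constructor
  · intro x hx
    simp only [Subgraph.deleteVerts_verts, Set.mem_diff, Set.mem_singleton_iff]
    exact ⟨hx, fun h => hv (h ▸ hx)⟩
  · intro x y hxy
    simp only [Subgraph.deleteVerts_adj, Set.mem_singleton_iff]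
    exact ⟨hxy.fst_mem, fun h => hv (h ▸ hxy.fst_mem),
      hxy.snd_mem, fun h => hv (h ▸ hxy.snd_mem), hxy⟩

lemma conn_del_start {a b : V} (p : G.Walk a b) (hp : p.IsPath) (hab : a ≠ b) :
    (p.toSubgraph.deleteVerts {a}).Connected := by
  cases p with
  | nil => exact absurd rfl hab
  | cons h q =>
    rw [Walk.cons_isPath_iff] at hp
    refine Subgraph.Connected.mono ?_ ?_ q.toSubgraph_connected
    · constructor
      · intro x hx
        simp only [Subgraph.deleteVerts_verts, Set.mem_diff, Set.mem_singleton_iff]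
        rw [Walk.mem_verts_toSubgraph] at hx
        refine ⟨?_, fun hxa => hp.2 (hxa ▸ hx)⟩
        simp only [Walk.toSubgraph, Subgraph.verts_sup]
        exact Or.inr (by rwa [Walk.mem_verts_toSubgraph])
      · intro x y hxy
        have hx := hxy.fst_mem
        have hy := hxy.snd_mem
        rw [Walk.mem_verts_toSubgraph] at hx hy
        simp only [Subgraph.deleteVerts_adj, Set.mem_singleton_iff]
        refine ⟨?_, fun h' => hp.2 (h' ▸ hx), ?_, fun h' => hp.2 (h' ▸ hy), ?_⟩
        · simp only [Walk.toSubgraph, Subgraph.verts_sup]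
          exact Or.inr (by rwa [Walk.mem_verts_toSubgraph])
        · simp only [Walk.toSubgraph, Subgraph.verts_sup]
          exact Or.inr (by rwa [Walk.mem_verts_toSubgraph])
        · simp only [Walk.toSubgraph, Subgraph.sup_adj]
          exact Or.inr hxy
    · apply Set.eq_of_subset_of_subset
      · intro x hx
        rw [Walk.mem_verts_toSubgraph] at hx
        simp only [Subgraph.deleteVerts_verts, Set.mem_diff, Set.mem_singleton_iff]
        constructor
        · rw [Walk.mem_verts_toSubgraph, Walk.support_cons]
          exact List.mem_cons_of_mem _ hx
        · exact fun hxa => hp.2 (hxa ▸ hx)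
      · intro x hx
        simp only [Subgraph.deleteVerts_verts, Set.mem_diff, Set.mem_singleton_iff,
          Walk.mem_verts_toSubgraph, Walk.support_cons, List.mem_cons] at hx
        rw [Walk.mem_verts_toSubgraph]
        rcases hx.1 with h' | h'
        · exact absurd h' hx.2
        · exact h'

lemma conn_del_end {a b : V} (p : G.Walk a b) (hp : p.IsPath) (hab : a ≠ b) :
    (p.toSubgraph.deleteVerts {b}).Connected := by
  have := conn_del_start p.reverse hp.reverse hab.symm
  rwa [Walk.toSubgraph_reverse] at this

lemma conn_del_cycle {x : V} (c : G.Walk x x) (hc : c.IsCycle) (v : V) :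
    (c.toSubgraph.deleteVerts {v}).Connected := by
  classical
  by_cases hv : v ∈ c.support
  · rw [← Walk.toSubgraph_rotate c hv]
    have hc' := hc.rotate hv
    generalize hrc : c.rotate v hv = c' at *
    cases c' with
    | nil => exact absurd hc' (by simp [Walk.isCycle_def])
    | cons h q =>
      rw [Walk.cons_isCycle_iff] at hc'
      have hq : q.IsPath := hc'.1
      have hne : _ ≠ v := h.ne'
      refine Subgraph.Connected.mono (Subgraph.deleteVerts_mono ?_) ?_
        (conn_del_end q hq hne)
      · simp only [Walk.toSubgraph]
        exact le_sup_right
      · apply Set.eq_of_subset_of_subset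
        · intro z hz
          simp only [Subgraph.deleteVerts_verts, Set.mem_diff, Set.mem_singleton_iff,
            Walk.mem_verts_toSubgraph, Walk.support_cons, List.mem_cons] at hz ⊢
          exact ⟨Or.inr hz.1, hz.2⟩
        · intro z hz
          simp only [Subgraph.deleteVerts_verts, Set.mem_diff, Set.mem_singleton_iff,
            Walk.mem_verts_toSubgraph, Walk.support_cons, List.mem_cons] at hz ⊢
          rcases hz.1 with h' | h'
          · exact absurd h' hz.2
          · exact ⟨h', hz.2⟩
  · rw [deleteVerts_eq_self]
    · exact c.toSubgraph_connected
    · rwa [Walk.mem_verts_toSubgraph]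

lemma ear_step {H : G.Subgraph} (e : EarData G) (he : IsEar H e)
    (hH : H.Connected) (hHd : ∀ v, (H.deleteVerts {v}).Connected) :
    (H ⊔ e.2.2.toSubgraph).Connected ∧
      ∀ v, ((H ⊔ e.2.2.toSubgraph).deleteVerts {v}).Connected := by
  classical
  obtain ⟨a, b, p⟩ := e
  obtain ⟨hp, hab, ha, hb, hint, hedge⟩ := he
  simp only at hp hab ha hb hint hedge ⊢
  constructor
  · refine Subgraph.connected_sup hH.preconnected p.toSubgraph_connected.preconnected ⟨a, ?_⟩
    simp only [Subgraph.verts_inf, Set.mem_inter_iff, Walk.mem_verts_toSubgraph]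
    exact ⟨ha, p.start_mem_support⟩
  · intro v
    rw [deleteVerts_sup]
    by_cases hvp : v ∈ p.support
    · by_cases hva : v = a
      · subst hva
        refine Subgraph.connected_sup (hHd v).preconnected (conn_del_start p hp hab).preconnected ⟨b, ?_⟩
        simp only [Subgraph.verts_inf, Set.mem_inter_iff, Subgraph.deleteVerts_verts,
          Set.mem_diff, Set.mem_singleton_iff, Walk.mem_verts_toSubgraph]
        exact ⟨⟨hb, fun h => hab h.symm⟩, p.end_mem_support, fun h => hab h.symm⟩
      · by_cases hvb : v = b
        · subst hvb
          refine Subgraph.connected_sup (hHd v).preconnected (conn_del_end p hp hab).preconnected ⟨a, ?_⟩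
          simp only [Subgraph.verts_inf, Set.mem_inter_iff, Subgraph.deleteVerts_verts,
            Set.mem_diff, Set.mem_singleton_iff, Walk.mem_verts_toSubgraph]
          exact ⟨⟨ha, hab⟩, p.start_mem_support, hab⟩
        · -- v is internal
          have hvH : v ∉ H.verts := hint v hvp hva hvb
          rw [deleteVerts_eq_self H hvH]
          rw [← Walk.take_spec p hvp, Walk.toSubgraph_append, deleteVerts_sup,
            ← sup_assoc]
          have h1 : (p.takeUntil v hvp).IsPath := hp.takeUntil hvp
          have h2 : (p.dropUntil v hvp).IsPath := hp.dropUntil hvp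
          have hA := conn_del_end (p.takeUntil v hvp) h1 (fun h => hva h.symm)
          have hB := conn_del_start (p.dropUntil v hvp) h2 (fun h => hvb h)
          refine Subgraph.connected_sup (Subgraph.connected_sup hH.preconnected hA.preconnected ⟨a, ?_⟩).preconnected hB.preconnected ⟨b, ?_⟩
          · simp only [Subgraph.verts_inf, Set.mem_inter_iff, Subgraph.deleteVerts_verts,
              Set.mem_diff, Set.mem_singleton_iff, Walk.mem_verts_toSubgraph]
            exact ⟨ha, (p.takeUntil v hvp).start_mem_support, fun h => hva h.symm⟩
          · simp only [Subgraph.verts_sup, Subgraph.verts_inf, Set.mem_inter_iff,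
              Subgraph.deleteVerts_verts, Set.mem_diff, Set.mem_singleton_iff,
              Walk.mem_verts_toSubgraph, Set.mem_union]
            exact ⟨Or.inl hb, (p.dropUntil v hvp).end_mem_support, fun h => hvb h.symm⟩
    · rw [deleteVerts_eq_self p.toSubgraph (by rwa [Walk.mem_verts_toSubgraph])]
      refine Subgraph.connected_sup (hHd v).preconnected p.toSubgraph_connected.preconnected ⟨a, ?_⟩
      simp only [Subgraph.verts_inf, Set.mem_inter_iff, Subgraph.deleteVerts_verts,
        Set.mem_diff, Set.mem_singleton_iff, Walk.mem_verts_toSubgraph]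
      exact ⟨⟨ha, fun h => hvp (h ▸ p.start_mem_support)⟩, p.start_mem_support⟩

lemma earsUnion_concat {x : V} (base : G.Walk x x) (l : List (EarData G))
    (e : EarData G) :
    earsUnion base (l ++ [e]) = earsUnion base l ⊔ e.2.2.toSubgraph := by
  simp [earsUnion, List.foldl_append]

lemma earsUnion_inv {x : V} (base : G.Walk x x) (hb : base.IsCycle)
    (ears : List (EarData G))
    (hcond : ∀ i (h : i < ears.length),
      IsEar (earsUnion base (ears.take i)) (ears.get ⟨i, h⟩)) :
    (earsUnion base ears).Connected ∧
      ∀ v, ((earsUnion base ears).deleteVerts {v}).Connected := by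
  suffices H : ∀ i, i ≤ ears.length → ((earsUnion base (ears.take i)).Connected ∧
      ∀ v, ((earsUnion base (ears.take i)).deleteVerts {v}).Connected) by
    have := H ears.length le_rfl
    rwa [List.take_length] at this
  intro i
  induction i with
  | zero =>
    intro _
    have : earsUnion base (ears.take 0) = base.toSubgraph := rfl
    rw [this]
    exact ⟨base.toSubgraph_connected, fun v => conn_del_cycle base hb v⟩
  | succ n ih =>
    intro hle
    have hn : n < ears.length := Nat.lt_of_succ_le hle
    have ihn := ih hn.le
    rw [List.take_succ, List.getElem?_eq_getElem hn]
    simp only [Option.toList_some]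
    rw [earsUnion_concat]
    have hcond' := hcond n hn
    simp only [List.get_eq_getElem] at hcond'
    exact ear_step _ hcond' ihn.1 ihn.2

lemma forward_dir (ed : EarDecomposition G) :
    G.Connected ∧ ∀ v, ((⊤ : G.Subgraph).deleteVerts {v}).coe.Connected := by
  have inv := earsUnion_inv ed.base ed.base_cycle ed.ears ed.ear_cond
  rw [ed.union_top] at inv
  refine ⟨?_, fun v => Subgraph.connected_iff'.mp (inv.2 v)⟩
  exact (Subgraph.topIso (G := G)).connected_iff.mp (Subgraph.connected_iff'.mp inv.1)

lemma crossing_edge {S : Set V} : ∀ {a b : V}, G.Walk a b → a ∈ S → b ∉ S →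
    ∃ x v, x ∈ S ∧ v ∉ S ∧ G.Adj x v := by
  intro a b w
  induction w with
  | nil => intro ha hb; exact absurd ha hb
  | @cons u c d h q ih =>
    intro ha hb
    by_cases hc : c ∈ S
    · exact ih hc hb
    · exact ⟨u, c, ha, hc, h⟩

lemma first_hit {S : Set V} : ∀ {a b : V} (w : G.Walk a b), a ∉ S → b ∈ S →
    ∃ (z : V) (p : G.Walk a z), p.IsPath ∧ z ∈ S ∧
      (∀ u ∈ p.support, u ∈ S → u = z) ∧ (∀ u ∈ p.support, u ∈ w.support) := by
  classical
  intro a b w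
  induction w with
  | nil => intro ha hb; exact absurd hb ha
  | @cons u c d h q ih =>
    intro ha hb
    by_cases hc : c ∈ S
    · refine ⟨c, Walk.cons h Walk.nil, ?_, hc, ?_, ?_⟩
      · simp [h.ne]
      · intro z hz hzS
        simp only [Walk.support_cons, Walk.support_nil, List.mem_cons,
          List.mem_singleton, List.not_mem_nil, or_false] at hz
        rcases hz with rfl | rfl
        · exact absurd hzS ha
        · rfl
      · intro z hz
        simp only [Walk.support_cons, Walk.support_nil, List.mem_cons,
          List.not_mem_nil, or_false] at hz
        simp only [Walk.support_cons, List.mem_cons]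
        rcases hz with rfl | rfl
        · exact Or.inl rfl
        · exact Or.inr q.start_mem_support
    · obtain ⟨z, p, hp, hzS, honly, hsub⟩ := ih hc hb
      refine ⟨z, (Walk.cons h p).bypass, (Walk.cons h p).bypass_isPath, hzS, ?_, ?_⟩
      · intro u hu huS
        have := (Walk.cons h p).support_bypass_subset hu
        simp only [Walk.support_cons, List.mem_cons] at this
        rcases this with rfl | hup
        · exact absurd huS ha
        · exact honly u hup huS
      · intro u hu
        have := (Walk.cons h p).support_bypass_subset hu
        simp only [Walk.support_cons, List.mem_cons] at this ⊢
        rcases this with rfl | hup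
        · exact Or.inl rfl
        · exact Or.inr (hsub u hup)

variable [Fintype V]

lemma exists_third (u a : V) (h3 : 3 ≤ Nat.card V) : ∃ c : V, c ≠ u ∧ c ≠ a := by
  classical
  by_contra h
  push_neg at h
  have hsub : (Finset.univ : Finset V) ⊆ {u, a} := by
    intro c _
    simp only [Finset.mem_insert, Finset.mem_singleton]
    by_cases hc : c = u
    · exact Or.inl hc
    · exact Or.inr (h c hc)
  have := Finset.card_le_card hsub
  rw [Nat.card_eq_fintype_card] at h3
  have h2 : ({u, a} : Finset V).card ≤ 2 := Finset.card_insert_le _ _ |>.trans (by simp)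
  simp only [Finset.card_univ] at this
  omega

/-- a vertex adjacent to u within the graph minus x, given another vertex of G - x -/
lemma exists_nbr_del (x u c : V) (hu : u ≠ x) (hc : c ≠ x) (hcu : c ≠ u)
    (hconn : ((⊤ : G.Subgraph).deleteVerts {x}).coe.Connected) :
    ∃ b : V, b ≠ x ∧ G.Adj u b := by
  have hu' : u ∈ ((⊤ : G.Subgraph).deleteVerts {x}).verts := by simp [hu]
  have hc' : c ∈ ((⊤ : G.Subgraph).deleteVerts {x}).verts := by simp [hc]
  obtain ⟨w⟩ := hconn.preconnected ⟨u, hu'⟩ ⟨c, hc'⟩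
  have : (⟨u, hu'⟩ : ((⊤ : G.Subgraph).deleteVerts {x}).verts) ∈
      ({⟨u, hu'⟩} : Set _) := rfl
  obtain ⟨p, q, hp, hq, hadj⟩ := crossing_edge w this (by
    simp only [Set.mem_singleton_iff]
    intro hh
    exact hcu (congrArg Subtype.val hh))
  rw [Set.mem_singleton_iff] at hp
  subst hp
  refine ⟨q.val, ?_, ?_⟩
  · have := q.2
    simp only [Subgraph.deleteVerts_verts, Set.mem_diff, Set.mem_singleton_iff] at this
    exact this.2
  · exact ((⊤ : G.Subgraph).deleteVerts {x}).coe_adj_sub _ _ hadj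

lemma exists_cycle (h2 : TwoConnected G) : ∃ (u : V) (c : G.Walk u u), c.IsCycle := by
  classical
  have h3 := h2.2.1
  have : Nonempty V := by
    have : 0 < Nat.card V := by omega
    exact Nat.card_pos_iff.mp this |>.1
  obtain ⟨u⟩ := this
  -- a neighbor of u
  obtain ⟨y, hy1, hy2⟩ := exists_third u u h3
  have ha : ∃ a : V, G.Adj u a := by
    obtain ⟨w⟩ := h2.1.preconnected u y
    have hu : u ∈ ({u} : Set V) := rfl
    obtain ⟨p, q, hp, hq, hadj⟩ := crossing_edge w hu (by simpa using hy1)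
    rw [Set.mem_singleton_iff] at hp
    subst hp
    exact ⟨q, hadj⟩
  obtain ⟨a, hua⟩ := ha
  -- a second neighbor of u, distinct from a, via G - a
  obtain ⟨c, hc1, hc2⟩ := exists_third u a h3
  obtain ⟨b, hba, hub⟩ := exists_nbr_del a u c hua.ne hc2 hc1 (h2.2.2 a)
  -- a path from a to b in G - u
  have hau : a ≠ u := hua.ne'
  have hbu : b ≠ u := hub.ne'
  have hva : a ∈ ((⊤ : G.Subgraph).deleteVerts {u}).verts := by simp [hau]
  have hvb : b ∈ ((⊤ : G.Subgraph).deleteVerts {u}).verts := by simp [hbu]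
  obtain ⟨w0⟩ := (h2.2.2 u).preconnected ⟨a, hva⟩ ⟨b, hvb⟩
  set w1 := w0.map ((⊤ : G.Subgraph).deleteVerts {u}).hom with hw1
  have hw1sup : ∀ z ∈ w1.support, z ≠ u := by
    intro z hz
    rw [hw1, Walk.support_map, List.mem_map] at hz
    obtain ⟨z', hz', rfl⟩ := hz
    have := z'.2
    simp only [Subgraph.deleteVerts_verts, Set.mem_diff, Set.mem_singleton_iff] at this
    exact this.2
  set P := w1.bypass with hP
  have hPpath : P.IsPath := w1.bypass_isPath
  have hPu : u ∉ P.support := fun h => hw1sup u (w1.support_bypass_subset h) rfl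
  refine ⟨b, Walk.cons hub.symm (Walk.cons hua P), ?_⟩
  rw [Walk.cons_isCycle_iff]
  constructor
  · exact (Walk.cons_isPath_iff _ _).mpr ⟨hPpath, hPu⟩
  · intro hmem
    change s(b, u) ∈ s(u, a) :: P.edges at hmem
    rw [List.mem_cons] at hmem
    rcases hmem with h | h
    · rw [Sym2.eq_iff] at h
      rcases h with ⟨h1, _⟩ | ⟨h1, _⟩
      · exact hbu h1
      · exact hba h1
    · exact hPu (Walk.snd_mem_support_of_mem_edges P h)


lemma exists_ear {H : G.Subgraph} (h2 : TwoConnected G) (hne : H ≠ ⊤)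
    (hv2 : ∃ p q : V, p ∈ H.verts ∧ q ∈ H.verts ∧ p ≠ q) :
    ∃ e : EarData G, IsEar H e := by
  classical
  by_cases hverts : H.verts = Set.univ
  · -- all vertices present, some edge missing
    have hAdj : ∃ x y, G.Adj x y ∧ ¬ H.Adj x y := by
      by_contra hco
      push_neg at hco
      apply hne
      refine Subgraph.ext (by rw [hverts, Subgraph.verts_top]) ?_
      funext x y
      refine propext ⟨fun h => Subgraph.top_adj.mpr h.adj_sub, fun h => ?_⟩
      exact hco x y (Subgraph.top_adj.mp h)
    obtain ⟨x, y, hadj, hnadj⟩ := hAdj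
    refine ⟨⟨x, y, Walk.cons hadj Walk.nil⟩, ?_, hadj.ne, ?_, ?_, ?_, ?_⟩
    · simp [hadj.ne]
    · simp [hverts]
    · simp [hverts]
    · intro v hv hv1 hv2
      simp only [Walk.support_cons, Walk.support_nil, List.mem_cons,
        List.mem_singleton, List.not_mem_nil, or_false] at hv
      rcases hv with rfl | rfl
      · exact absurd rfl hv1
      · exact absurd rfl hv2
    · intro ed hed
      simp only [Walk.edges_cons, Walk.edges_nil, List.mem_singleton] at hed
      subst hed
      rw [Subgraph.mem_edgeSet]
      exact hnadj
  · -- some vertex missing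
    obtain ⟨b0, hb0⟩ := (Set.ne_univ_iff_exists_notMem _).mp hverts
    obtain ⟨p0, q0, hp0, hq0, hpq⟩ := hv2
    -- crossing edge
    obtain ⟨w⟩ := h2.1.preconnected p0 b0
    obtain ⟨x, v, hx, hv, hadj⟩ := crossing_edge w hp0 hb0
    have hvx : v ≠ x := fun h => hv (h ▸ hx)
    -- a target vertex in H.verts, distinct from x
    obtain ⟨y0, hy0H, hy0x⟩ : ∃ y0, y0 ∈ H.verts ∧ y0 ≠ x := by
      by_cases hpx : p0 = x
      · exact ⟨q0, hq0, fun h => hpq (hpx ▸ h ▸ rfl)⟩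
      · exact ⟨p0, hp0, hpx⟩
    have hvmem : v ∈ ((⊤ : G.Subgraph).deleteVerts {x}).verts := by simp [hvx]
    have hymem : y0 ∈ ((⊤ : G.Subgraph).deleteVerts {x}).verts := by simp [hy0x]
    obtain ⟨w0⟩ := (h2.2.2 x).preconnected ⟨v, hvmem⟩ ⟨y0, hymem⟩
    set w1 := w0.map ((⊤ : G.Subgraph).deleteVerts {x}).hom with hw1
    have hxsup : ∀ z ∈ w1.support, z ≠ x := by
      intro z hz
      rw [hw1, Walk.support_map, List.mem_map] at hz
      obtain ⟨z', hz', rfl⟩ := hz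
      have := z'.2
      simp only [Subgraph.deleteVerts_verts, Set.mem_diff, Set.mem_singleton_iff] at this
      exact this.2
    obtain ⟨z, p, hppath, hzH, honly, hsub⟩ := first_hit (S := H.verts) w1 hv hy0H
    have hxp : x ∉ p.support := fun h => hxsup x (hsub x h) rfl
    have hxz : x ≠ z := fun h => hxp (h ▸ p.end_mem_support)
    refine ⟨⟨x, z, Walk.cons hadj p⟩, ?_, hxz, hx, hzH, ?_, ?_⟩
    · exact (Walk.cons_isPath_iff _ _).mpr ⟨hppath, hxp⟩
    · intro u hu hu1 hu2
      change u ∈ x :: p.support at hu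
      rw [List.mem_cons] at hu
      rcases hu with rfl | hu
      · exact absurd rfl hu1
      · intro huH
        exact hu2 (honly u hu huH)
    · intro ed hed
      change ed ∈ s(x, v) :: p.edges at hed
      rw [List.mem_cons] at hed
      rcases hed with rfl | hed
      · intro hedH
        exact hv (Subgraph.mem_edgeSet.mp hedH).snd_mem
      · revert hed
        induction ed using Sym2.ind with
        | _ c d =>
          intro hed hedH
          have hcd := Subgraph.mem_edgeSet.mp hedH
          have hc := honly c (Walk.fst_mem_support_of_mem_edges p hed) hcd.fst_mem
          have hd := honly d (Walk.snd_mem_support_of_mem_edges p hed) hcd.snd_mem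
          exact hcd.ne (hc.trans hd.symm)

lemma ear_new_edge {H : G.Subgraph} {e : EarData G} (he : IsEar H e) :
    ∃ ed, ed ∈ G.edgeSet ∧ ed ∉ H.edgeSet ∧ ed ∈ (H ⊔ e.2.2.toSubgraph).edgeSet := by
  obtain ⟨a, b, p⟩ := e
  obtain ⟨hp, hab, ha, hb, hint, hedge⟩ := he
  simp only at hp hab hedge ⊢
  have hne : p.edges ≠ [] := by
    cases p with
    | nil => exact absurd rfl hab
    | cons h q => simp
  obtain ⟨ed0, hed0⟩ := List.exists_mem_of_ne_nil _ hne
  refine ⟨ed0, p.edges_subset_edgeSet hed0, hedge ed0 hed0, ?_⟩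
  have : ed0 ∈ p.toSubgraph.edgeSet := by
    rw [Walk.edgeSet_toSubgraph]
    exact hed0
  rw [Subgraph.edgeSet_sup]
  exact Or.inr this


variable [Fintype V]

lemma missing_finite (H : G.Subgraph) : (G.edgeSet \ H.edgeSet).Finite := by
  classical
  exact Set.toFinite _

lemma missing_lt {H : G.Subgraph} {e : EarData G} (he : IsEar H e) :
    (G.edgeSet \ (H ⊔ e.2.2.toSubgraph).edgeSet).ncard
      < (G.edgeSet \ H.edgeSet).ncard := by
  obtain ⟨ed0, hG0, hH0, hS0⟩ := ear_new_edge he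
  apply Set.ncard_lt_ncard ?_ (missing_finite H)
  constructor
  · exact Set.diff_subset_diff_right (Subgraph.edgeSet_mono le_sup_left)
  · intro hts
    exact (hts ⟨hG0, hH0⟩).2 hS0

lemma base_le_earsUnion {x : V} (base : G.Walk x x) (l : List (EarData G)) :
    base.toSubgraph ≤ earsUnion base l := by
  suffices h : ∀ (l : List (EarData G)) (K : G.Subgraph),
      K ≤ l.foldl (fun H e => H ⊔ e.2.2.toSubgraph) K from h l _
  intro l
  induction l with
  | nil => intro K; exact le_rfl
  | cons e l ih =>
    intro K
    calc K ≤ K ⊔ e.2.2.toSubgraph := le_sup_left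
    _ ≤ _ := ih _

lemma two_verts_of_cycle {x : V} (base : G.Walk x x) (hb : base.IsCycle)
    {H : G.Subgraph} (hle : base.toSubgraph ≤ H) :
    ∃ p q : V, p ∈ H.verts ∧ q ∈ H.verts ∧ p ≠ q := by
  cases base with
  | nil => exact absurd hb (by simp [Walk.isCycle_def])
  | @cons _ w _ h q =>
    refine ⟨x, w, hle.1 ?_, hle.1 ?_, h.ne⟩
    · rw [Walk.mem_verts_toSubgraph]
      exact Walk.start_mem_support _
    · rw [Walk.mem_verts_toSubgraph, Walk.support_cons]
      exact List.mem_cons_of_mem _ q.start_mem_support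

lemma build (h2 : TwoConnected G) {x : V} (base : G.Walk x x) (hb : base.IsCycle) :
    ∀ (n : ℕ) (ears : List (EarData G)),
      (∀ i (h : i < ears.length), IsEar (earsUnion base (ears.take i)) (ears.get ⟨i, h⟩)) →
      (G.edgeSet \ (earsUnion base ears).edgeSet).ncard ≤ n →
      Nonempty (EarDecomposition G) := by
  intro n
  induction n with
  | zero =>
    intro ears hcond hcard
    by_cases htop : earsUnion base ears = ⊤
    · exact ⟨⟨x, base, hb, ears, hcond, htop⟩⟩
    · exfalso
      obtain ⟨e, he⟩ := exists_ear h2 htop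
        (two_verts_of_cycle base hb (base_le_earsUnion base ears))
      obtain ⟨ed0, hG0, hH0, _⟩ := ear_new_edge he
      have : 0 < (G.edgeSet \ (earsUnion base ears).edgeSet).ncard := by
        rw [Set.ncard_pos (missing_finite _)]
        exact ⟨ed0, hG0, hH0⟩
      omega
  | succ n ih =>
    intro ears hcond hcard
    by_cases htop : earsUnion base ears = ⊤
    · exact ⟨⟨x, base, hb, ears, hcond, htop⟩⟩
    · obtain ⟨e, he⟩ := exists_ear h2 htop
        (two_verts_of_cycle base hb (base_le_earsUnion base ears))
      refine ih (ears ++ [e]) ?_ ?_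
      · intro i h
        simp only [List.length_append, List.length_singleton] at h
        by_cases hi : i < ears.length
        · have ht : (ears ++ [e]).take i = ears.take i := by
            rw [List.take_append_of_le_length hi.le]
          have hg : (ears ++ [e]).get ⟨i, by simp; omega⟩ = ears.get ⟨i, hi⟩ := by
            simp only [List.get_eq_getElem]
            exact List.getElem_append_left hi
          simp only [List.get_eq_getElem] at hg ⊢
          rw [ht]
          rw [show ((ears ++ [e])[i]'(by simp; omega)) = ears[i] from hg]
          exact hcond i hi
        · have hie : i = ears.length := by omega
          subst hie
          have ht : (ears ++ [e]).take ears.length = ears := List.take_left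
          have hg : (ears ++ [e]).get ⟨ears.length, by simp⟩ = e := by
            simp
          simp only [List.get_eq_getElem] at hg ⊢
          rw [ht, show ((ears ++ [e])[ears.length]'(by simp)) = e from hg]
          exact he
      · rw [earsUnion_concat]
        have := missing_lt he
        omega



end Helpers

/-- a graph with at least 3 vertices has an ear-decomposition
iff it is 2-connected. -/
theorem stmt11 {V : Type*} [Fintype V] (G : SimpleGraph V)
    (h3 : 3 ≤ Nat.card V) :
    Nonempty (EarDecomposition G) ↔ TwoConnected G := by
  constructor
  · rintro ⟨ed⟩
    exact ⟨(forward_dir ed).1, h3, (forward_dir ed).2⟩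
  · intro h2
    obtain ⟨u, c, hc⟩ := exists_cycle h2
    exact build h2 c hc _ []
      (fun i h => absurd h (by simp)) le_rfl
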